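/- Let A be an n×n matrix over a commutative ring. Denote by A with superscript columns and subscript rows removed the corresponding minors. Then det(A)·det(A_{1,n}^{1,n}) = det(A_1^1)·det(A_n^n) − det(A_1^n)·det(A_n^1), where A_{i}^{j} is A with row i and column j deleted and A_{1,n}^{1,n} is A with rows 1,n and columns 1,n deleted. -/

import Mathlib

open Matrix
namespace DodgsonAux
variable {R : Type*} [CommRing R] {n : ℕ}

def inner (n : ℕ) (k : Fin n) : Fin (n + 2) := k.castSucc.succ
lemma inner_ne_zero (k : Fin n) : inner n k ≠ 0 := Fin.succ_ne_zero _
lemma inner_ne_last (k : Fin n) : inner n k ≠ Fin.last (n + 1) := by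
  intro h
  have := Fin.succ_injective _ (h.trans (Fin.succ_last n).symm)
  exact (Fin.castSucc_lt_last k).ne this
lemma inner_injective : Function.Injective (inner n) := fun a b h =>
  Fin.castSucc_injective _ (Fin.succ_injective _ h)
def f (n : ℕ) : Fin 2 ⊕ Fin n → Fin (n + 2) := Sum.elim ![0, Fin.last (n + 1)] (inner n)
lemma f_injective : Function.Injective (f n) := by
  rintro (a | a) (b | b) h
  · fin_cases a <;> fin_cases b <;> simp_all [f]
    all_goals first
      | rfl
      | exact absurd h.symm (Fin.last_pos.ne')
      | exact absurd h (Fin.last_pos.ne')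
  · fin_cases a <;> simp [f] at h
    · exact absurd h.symm (inner_ne_zero b)
    · exact absurd h.symm (inner_ne_last b)
  · fin_cases b <;> simp [f] at h
    · exact absurd h (inner_ne_zero a)
    · exact absurd h (inner_ne_last a)
  · exact congrArg Sum.inr (inner_injective h)
noncomputable def e (n : ℕ) : Fin 2 ⊕ Fin n ≃ Fin (n + 2) :=
  Equiv.ofBijective (f n)
    ((Fintype.bijective_iff_injective_and_card _).2 ⟨f_injective, by simp; omega⟩)
lemma e_inl_zero : e n (Sum.inl 0) = 0 := rfl
lemma e_inl_one : e n (Sum.inl 1) = Fin.last (n + 1) := rfl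
lemma e_inr (k : Fin n) : e n (Sum.inr k) = inner n k := rfl

/-- The bordered identity: rows 0 and last replaced by rows of the adjugate. -/
noncomputable def M (A : Matrix (Fin (n + 2)) (Fin (n + 2)) R) :
    Matrix (Fin (n + 2)) (Fin (n + 2)) R :=
  ((1 : Matrix (Fin (n + 2)) (Fin (n + 2)) R).updateRow 0 (adjugate A 0)).updateRow
    (Fin.last (n + 1)) (adjugate A (Fin.last (n + 1)))

lemma M_zero (A : Matrix (Fin (n + 2)) (Fin (n + 2)) R) : M A 0 = adjugate A 0 := by
  rw [M, updateRow_ne (Fin.last_pos.ne), updateRow_self]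

lemma M_last (A : Matrix (Fin (n + 2)) (Fin (n + 2)) R) :
    M A (Fin.last (n + 1)) = adjugate A (Fin.last (n + 1)) := by
  rw [M, updateRow_self]

lemma M_inner (A : Matrix (Fin (n + 2)) (Fin (n + 2)) R) (k : Fin n) :
    M A (inner n k) = (1 : Matrix (Fin (n + 2)) (Fin (n + 2)) R) (inner n k) := by
  rw [M, updateRow_ne (inner_ne_last k), updateRow_ne (inner_ne_zero k)]

lemma MA_zero (A : Matrix (Fin (n + 2)) (Fin (n + 2)) R) (j : Fin (n + 2)) :
    (M A * A) 0 j = A.det * (1 : Matrix (Fin (n + 2)) (Fin (n + 2)) R) 0 j := by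
  rw [mul_apply]
  simp only [M_zero]
  rw [← mul_apply, adjugate_mul, Matrix.smul_apply, smul_eq_mul]

lemma MA_last (A : Matrix (Fin (n + 2)) (Fin (n + 2)) R) (j : Fin (n + 2)) :
    (M A * A) (Fin.last (n + 1)) j
      = A.det * (1 : Matrix (Fin (n + 2)) (Fin (n + 2)) R) (Fin.last (n + 1)) j := by
  rw [mul_apply]
  simp only [M_last]
  rw [← mul_apply, adjugate_mul, Matrix.smul_apply, smul_eq_mul]

lemma MA_inner (A : Matrix (Fin (n + 2)) (Fin (n + 2)) R) (k : Fin n) (j : Fin (n + 2)) :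
    (M A * A) (inner n k) j = A (inner n k) j := by
  rw [mul_apply]
  simp only [M_inner]
  rw [← mul_apply, Matrix.one_mul]

lemma det_M_mul (A : Matrix (Fin (n + 2)) (Fin (n + 2)) R) :
    (M A * A).det = A.det ^ 2
      * (A.submatrix (fun i : Fin n => i.castSucc.succ) (fun j : Fin n => j.castSucc.succ)).det := by
  have hb : (M A * A).submatrix (e n) (e n)
      = fromBlocks (A.det • (1 : Matrix (Fin 2) (Fin 2) R)) 0
          (Matrix.of fun k t => A (inner n k) (f n (Sum.inl t)))
          (A.submatrix (inner n) (inner n)) := by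
    ext i j
    rcases i with t | k <;> rcases j with s | l
    · fin_cases t <;> fin_cases s <;>
        simp [e_inl_zero, e_inl_one, MA_zero, MA_last, Matrix.one_apply,
          (Fin.last_pos (n := n + 1)).ne', fromBlocks]
    · fin_cases t <;>
        simp [e_inl_zero, e_inl_one, e_inr, MA_zero, MA_last, Matrix.one_apply,
          (inner_ne_zero l).symm, (inner_ne_last l).symm, fromBlocks]
    · fin_cases s <;> simp [e_inl_zero, e_inl_one, e_inr, MA_inner, fromBlocks, f]
    · simp [e_inr, MA_inner, fromBlocks]
  have := det_submatrix_equiv_self (e n) (M A * A)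
  rw [← this, hb, det_fromBlocks_zero₁₂, det_smul, det_one, mul_one]
  simp only [Fintype.card_fin, sq]
  rfl
lemma det_M (A : Matrix (Fin (n + 2)) (Fin (n + 2)) R) :
    (M A).det = adjugate A 0 0 * adjugate A (Fin.last (n + 1)) (Fin.last (n + 1))
      - adjugate A 0 (Fin.last (n + 1)) * adjugate A (Fin.last (n + 1)) 0 := by
  have hb : (M A).submatrix (e n) (e n)
      = fromBlocks
          !![adjugate A 0 0, adjugate A 0 (Fin.last (n + 1));
             adjugate A (Fin.last (n + 1)) 0, adjugate A (Fin.last (n + 1)) (Fin.last (n + 1))]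
          (Matrix.of fun t k => M A (f n (Sum.inl t)) (inner n k))
          0 (1 : Matrix (Fin n) (Fin n) R) := by
    ext i j
    rcases i with t | k <;> rcases j with s | l
    · fin_cases t <;> fin_cases s <;>
        simp [e_inl_zero, e_inl_one, M_zero, M_last, fromBlocks]
    · fin_cases t <;> simp [e_inl_zero, e_inl_one, e_inr, fromBlocks] <;> rfl
    · fin_cases s <;>
        simp [e_inl_zero, e_inl_one, e_inr, M_inner, Matrix.one_apply,
          inner_ne_zero k, inner_ne_last k, fromBlocks]
    · simp [e_inr, M_inner, Matrix.one_apply, inner_injective.eq_iff, fromBlocks]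
  have := det_submatrix_equiv_self (e n) (M A)
  rw [← this, hb, det_fromBlocks_zero₂₁, det_one, mul_one, det_fin_two_of]

/-- The identity multiplied by `det A`, valid over any commutative ring. -/
lemma key (A : Matrix (Fin (n + 2)) (Fin (n + 2)) R) :
    A.det * (A.det
        * (A.submatrix (fun i : Fin n => i.castSucc.succ) (fun j : Fin n => j.castSucc.succ)).det)
      = A.det * ((A.submatrix Fin.succ Fin.succ).det * (A.submatrix Fin.castSucc Fin.castSucc).det
        - (A.submatrix Fin.succ Fin.castSucc).det * (A.submatrix Fin.castSucc Fin.succ).det) := by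
  have h1 : (M A).det * A.det = A.det ^ 2
      * (A.submatrix (fun i : Fin n => i.castSucc.succ)
          (fun j : Fin n => j.castSucc.succ)).det := by
    rw [← det_mul, det_M_mul]
  rw [det_M] at h1
  have e00 : adjugate A 0 0 = (A.submatrix Fin.succ Fin.succ).det := by
    rw [adjugate_fin_succ_eq_det_submatrix]
    simp [Fin.succAbove_zero]
  have ell : adjugate A (Fin.last (n + 1)) (Fin.last (n + 1))
      = (A.submatrix Fin.castSucc Fin.castSucc).det := by
    rw [adjugate_fin_succ_eq_det_submatrix]
    simp [Fin.succAbove_last]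
  have e0l : adjugate A 0 (Fin.last (n + 1))
      = (-1) ^ (n + 1) * (A.submatrix Fin.castSucc Fin.succ).det := by
    rw [adjugate_fin_succ_eq_det_submatrix]
    simp [Fin.succAbove_last, Fin.succAbove_zero, Fin.val_last]
  have el0 : adjugate A (Fin.last (n + 1)) 0
      = (-1) ^ (n + 1) * (A.submatrix Fin.succ Fin.castSucc).det := by
    rw [adjugate_fin_succ_eq_det_submatrix]
    simp [Fin.succAbove_last, Fin.succAbove_zero, Fin.val_last]
  rw [e00, ell, e0l, el0] at h1
  have hsq : ((-1 : R) ^ (n * 2)) = 1 := Even.neg_one_pow ⟨n, by ring⟩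
  linear_combination (-1 : R) * h1 - (A.det * (A.submatrix Fin.castSucc Fin.succ).det
      * (A.submatrix Fin.succ Fin.castSucc).det) * hsq

end DodgsonAux
namespace DodgsonAux

lemma generic_det_ne_zero (n : ℕ) :
    (Matrix.of fun i j : Fin (n + 2) =>
        MvPolynomial.X (R := ℤ) (i, j)).det ≠ 0 := by
  intro h
  have h2 := congrArg (MvPolynomial.eval
    (fun p : Fin (n + 2) × Fin (n + 2) => if p.1 = p.2 then (1 : ℤ) else 0)) h
  rw [map_zero, RingHom.map_det, RingHom.mapMatrix_apply] at h2
  have h3 : (Matrix.of fun i j : Fin (n + 2) => MvPolynomial.X (R := ℤ) (i, j)).map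
      (MvPolynomial.eval fun p : Fin (n + 2) × Fin (n + 2) => if p.1 = p.2 then (1 : ℤ) else 0)
      = (1 : Matrix (Fin (n + 2)) (Fin (n + 2)) ℤ) := by
    ext i j
    simp [Matrix.one_apply]
  rw [h3, Matrix.det_one] at h2
  exact one_ne_zero h2

end DodgsonAux

/-- Desnanot–Jacobi identity (Dodgson condensation):
`det(A)·det(A_{1,n}^{1,n}) = det(A_1^1)·det(A_n^n) − det(A_1^n)·det(A_n^1)`,
where subscripts denote deleted rows and superscripts deleted columns. -/
theorem dodgson_condensation {R : Type*} [CommRing R] (n : ℕ)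
    (A : Matrix (Fin (n + 2)) (Fin (n + 2)) R) :
    A.det * (A.submatrix (fun i : Fin n => i.castSucc.succ) (fun j : Fin n => j.castSucc.succ)).det
      = (A.submatrix Fin.succ Fin.succ).det * (A.submatrix Fin.castSucc Fin.castSucc).det
        - (A.submatrix Fin.succ Fin.castSucc).det * (A.submatrix Fin.castSucc Fin.succ).det := by
  classical
  set G : Matrix (Fin (n + 2)) (Fin (n + 2)) (MvPolynomial (Fin (n + 2) × Fin (n + 2)) ℤ) :=
    Matrix.of fun i j => MvPolynomial.X (i, j) with hGdef
  have hgen : G.det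
        * (G.submatrix (fun i : Fin n => i.castSucc.succ) (fun j : Fin n => j.castSucc.succ)).det
      = (G.submatrix Fin.succ Fin.succ).det * (G.submatrix Fin.castSucc Fin.castSucc).det
        - (G.submatrix Fin.succ Fin.castSucc).det * (G.submatrix Fin.castSucc Fin.succ).det :=
    mul_left_cancel₀ (DodgsonAux.generic_det_ne_zero n) (DodgsonAux.key G)
  set φ : MvPolynomial (Fin (n + 2) × Fin (n + 2)) ℤ →+* R :=
    MvPolynomial.eval₂Hom (Int.castRingHom R) (fun p => A p.1 p.2) with hφdef
  have hmap : G.map φ = A := by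
    ext i j
    simp [hGdef, hφdef]
  have hsub : ∀ (f g : Fin n → Fin (n + 2)),
      φ ((G.submatrix f g).det) = ((A.submatrix f g)).det := by
    intro f g
    rw [RingHom.map_det, RingHom.mapMatrix_apply, ← Matrix.submatrix_map, hmap]
  have hsub' : ∀ (f g : Fin (n + 1) → Fin (n + 2)),
      φ ((G.submatrix f g).det) = ((A.submatrix f g)).det := by
    intro f g
    rw [RingHom.map_det, RingHom.mapMatrix_apply, ← Matrix.submatrix_map, hmap]
  have h := congrArg φ hgen
  rw [_root_.map_mul, _root_.map_sub, _root_.map_mul, _root_.map_mul, RingHom.map_det,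
    RingHom.mapMatrix_apply, hmap, hsub, hsub', hsub', hsub', hsub'] at h
  exact h
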